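/- For every s ≥ 0, the infimum over w > 0 of w·s + (w − 1)²/2 equals s − s²/2 if s < 1, and equals 1/2 if s ≥ 1. In other words, the concave conjugate of the χ²-divergence generator φ₂(w) = (w − 1)²/2 is the MCP function M(s). -/
import Mathlib


open Set Filter Topology

theorem stmt_15 :
    ∀ s : ℝ, 0 ≤ s →
      sInf ((fun w : ℝ => w * s + (w - 1)^2 / 2) '' Set.Ioi 0) =
        if s < 1 then s - s^2 / 2 else 1/2 := by
  intro s hs
  split_ifs with h1
  · apply le_antisymm
    · apply csInf_le
      · refine ⟨s - s^2/2, ?_⟩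
        rintro x ⟨w, hw, rfl⟩
        simp only [mem_Ioi] at hw
        nlinarith [sq_nonneg (w - (1 - s))]
      · exact ⟨1 - s, by simp [mem_Ioi]; linarith, by ring⟩
    · apply le_csInf
      · exact ⟨_, ⟨1, by simp, rfl⟩⟩
      · rintro x ⟨w, hw, rfl⟩
        simp only [mem_Ioi] at hw
        nlinarith [sq_nonneg (w - (1 - s))]
  · push_neg at h1
    apply csInf_eq_of_forall_ge_of_forall_gt_exists_lt
    · exact ⟨_, ⟨1, by simp, rfl⟩⟩
    · rintro x ⟨w, hw, rfl⟩
      simp only [mem_Ioi] at hw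
      nlinarith
    · intro v hv
      obtain ⟨δ, hδ⟩ : ∃ δ, δ = v - 1/2 := ⟨_, rfl⟩
      have hδpos : 0 < δ := by rw [hδ]; linarith
      obtain ⟨w, hw⟩ : ∃ w, w = min (δ / (s + 1)) 1 := ⟨_, rfl⟩
      have hwpos : 0 < w := hw ▸ lt_min (div_pos hδpos (by linarith)) one_pos
      have hw1 : w ≤ 1 := hw ▸ min_le_right _ _
      have hw2 : w ≤ δ / (s + 1) := hw ▸ min_le_left _ _
      have hw3 : w * (s + 1) ≤ δ := by
        rw [div_eq_mul_inv] at hw2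
        have := mul_le_mul_of_nonneg_right hw2 (by linarith : (0:ℝ) ≤ s + 1)
        rwa [mul_assoc, inv_mul_cancel₀ (by linarith : s + 1 ≠ 0), mul_one] at this
      refine ⟨w * s + (w - 1)^2 / 2, ⟨w, hwpos, rfl⟩, ?_⟩
      have hww : w * w ≤ w := mul_le_of_le_one_right hwpos.le hw1
      have hexp : w * s + (w - 1)^2 / 2 = w * s + w * w / 2 - w + 1/2 := by ring
      have hws : w * (s + 1) = w * s + w := by ring
      rw [hexp]
      linarith
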